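/- Fix λ ∈ (0,1) and z^0 ∈ ℝ^n with z^0 ≠ 0, and let T = 0 be the zero operator on ℝ^n. Then there exists NO summable sequence (v^t) in ℝ^n such that the iteration x^0 = z^0, x^{t+1} = (1−λ)x^t + v^t satisfies x^t = z^0/t for all t ≥ 1. Equivalently, the unique matching sequence v^t = z^0(λt + λ − 1)/(t(t+1)) (t ≥ 1), v^0 = λz^0, satisfies ∑_{t=0}^∞ ‖v^t‖ = ∞. -/

import Mathlib

lemma aux_not_summable (lam : ℝ) (hlam0 : 0 < lam) :
    ¬ Summable (fun t : ℕ => |(lam * t + lam - 1) / (t * (t + 1))|) := by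
  intro h
  have hf : Summable (fun t : ℕ => (lam * (t:ℝ) + lam - 1) / (t * (t + 1))) :=
    summable_abs_iff.mp h
  have h2 : Summable (fun t : ℕ => 1 / ((t:ℝ) * (t + 1))) := by
    refine Summable.of_nonneg_of_le (fun t => by positivity) (fun t => ?_)
      (Real.summable_one_div_nat_pow.mpr one_lt_two)
    rcases Nat.eq_zero_or_pos t with rfl | ht
    · simp
    · have ht' : (0:ℝ) < t := by exact_mod_cast ht
      apply one_div_le_one_div_of_le (by positivity)
      nlinarith
  have h3 := hf.add h2
  have heq : ∀ t : ℕ, (lam * (t:ℝ) + lam - 1) / (t * (t + 1)) + 1 / (t * (t + 1))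
      = lam * (1 / t) := by
    intro t
    rcases Nat.eq_zero_or_pos t with rfl | ht
    · simp
    · have ht' : (t:ℝ) ≠ 0 := by positivity
      have ht2 : (t:ℝ) + 1 ≠ 0 := by positivity
      field_simp
      ring
  have h4 : Summable (fun t : ℕ => lam * (1 / (t:ℝ))) := h3.congr heq
  have h5 : Summable (fun t : ℕ => 1 / (t:ℝ)) :=
    (summable_mul_left_iff (ne_of_gt hlam0)).mp h4
  exact Real.not_summable_one_div_natCast h5

/-- For the zero operator `T = 0` and `z^0 ≠ 0`, no summable
perturbation sequence `v` makes the iteration `x^0 = z^0`, `x^{t+1} = (1-λ)x^t + v^t`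
reproduce the sequence `z^t = z^0/t` (`t ≥ 1`). Equivalently, the unique matching
sequence `v^0 = λ z^0`, `v^t = z^0 (λt + λ - 1)/(t(t+1))` (`t ≥ 1`) is not summable. -/
theorem no_summable_perturbation_for_slow_sequence
    {n : ℕ} (lam : ℝ) (hlam0 : 0 < lam) (hlam1 : lam < 1)
    (z0 : EuclideanSpace ℝ (Fin n)) (hz0 : z0 ≠ 0) :
    (¬ ∃ v : ℕ → EuclideanSpace ℝ (Fin n),
        (Summable fun t => ‖v t‖) ∧
        ∃ x : ℕ → EuclideanSpace ℝ (Fin n),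
          x 0 = z0 ∧
          (∀ t, x (t + 1) = (1 - lam) • x t + v t) ∧
          ∀ t : ℕ, 1 ≤ t → x t = ((t : ℝ))⁻¹ • z0) ∧
      ¬ Summable fun t : ℕ =>
          ‖if t = 0 then lam • z0
            else ((lam * t + lam - 1) / (t * (t + 1))) • z0‖ := by
  have hz0n : ‖z0‖ ≠ 0 := norm_ne_zero_iff.mpr hz0
  set f : ℕ → ℝ := fun t => (lam * t + lam - 1) / (t * (t + 1)) with hfdef
  -- key: summable norms with value |f t| ‖z0‖ for t ≥ 1 gives contradiction
  have key : ∀ g : ℕ → ℝ, (∀ t : ℕ, 1 ≤ t → g t = |f t| * ‖z0‖) → ¬ Summable g := by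
    intro g hg hsum
    have h1 : Summable (fun t : ℕ => g (t + 1)) := (summable_nat_add_iff 1).mpr hsum
    have h2 : Summable (fun t : ℕ => |f (t + 1)|) := by
      have := h1.mul_right (‖z0‖⁻¹)
      refine this.congr (fun t => ?_)
      rw [hg (t + 1) (Nat.le_add_left 1 t)]
      field_simp
    have h3 : Summable (fun t : ℕ => |f t|) := (summable_nat_add_iff 1).mp h2
    exact aux_not_summable lam hlam0 h3
  constructor
  · rintro ⟨v, hv, x, hx0, hrec, hxt⟩
    apply key (fun t => ‖v t‖) _ hv
    intro t ht
    have heq : v t = f t • z0 := by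
      have h1 : x (t + 1) = ((↑(t + 1) : ℝ))⁻¹ • z0 := hxt (t + 1) (Nat.le_add_left 1 t)
      have h2 : x t = ((t : ℝ))⁻¹ • z0 := hxt t ht
      have h3 := hrec t
      rw [h1, h2] at h3
      have ht' : (t:ℝ) ≠ 0 := by
        have : (0:ℝ) < t := by exact_mod_cast ht
        positivity
      have ht2 : (t:ℝ) + 1 ≠ 0 := by positivity
      have hco : ((↑(t + 1) : ℝ))⁻¹ - (1 - lam) * ((t : ℝ))⁻¹ = f t := by
        push_cast
        rw [hfdef]
        field_simp
        ring
      have h4 : v t = ((↑(t + 1) : ℝ))⁻¹ • z0 - (1 - lam) • (((t:ℝ))⁻¹ • z0) :=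
        eq_sub_of_add_eq' h3.symm
      rw [h4, ← hco]
      module
    simp only [heq, norm_smul, Real.norm_eq_abs]
  · apply key
    intro t ht
    have ht0 : t ≠ 0 := Nat.one_le_iff_ne_zero.mp ht
    simp only [ht0, if_false, norm_smul, Real.norm_eq_abs]
    rfl
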